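/- Fix k,l ≥ 1 and positive integers r_1,…,r_k, t_1,…,t_l with r_1+···+r_k = t_1+···+t_l =: R. There is a constant C = C(k,l,R) such that for every prime power q, the sum of ∏_{i=1}^k Λ(u_i) ∏_{j=1}^l Λ(v_j) over all tuples (u_1,…,u_k,v_1,…,v_l) of monic polynomials over 𝔽_q with deg u_i = r_i, deg v_j = t_j, u_1···u_k = v_1···v_l, and such that NOT all of u_1,…,u_k are irreducible and pairwise distinct, is at most C q^{R−1}. -/

import Mathlib

open Polynomial BigOperators

/-- The von Mangoldt function for polynomials over a field: `Λ(u) = deg P` if `u = P^e` for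
some monic irreducible `P` and some `e ≥ 1`, and `Λ(u) = 0` otherwise. -/
noncomputable def polyVonMangoldt (F : Type) [Field F] (u : F[X]) : ℝ :=
  letI := Classical.propDecidable (∃ P : F[X], (P.Monic ∧ Irreducible P) ∧ ∃ e : ℕ, 1 ≤ e ∧ u = P ^ e)
  if h : ∃ P : F[X], (P.Monic ∧ Irreducible P) ∧ ∃ e : ℕ, 1 ≤ e ∧ u = P ^ e
  then ((Classical.choose h).natDegree : ℝ)
  else 0

namespace DegAux

variable {F : Type} [Field F]

def IsPP (u : F[X]) : Prop :=
  ∃ P : F[X], (P.Monic ∧ Irreducible P) ∧ ∃ e : ℕ, 1 ≤ e ∧ u = P ^ e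

lemma vM_def (u : F[X]) : polyVonMangoldt F u =
    letI := Classical.propDecidable (IsPP u)
    if h : IsPP u then ((Classical.choose h).natDegree : ℝ) else 0 := rfl

lemma monic_irred_eq {P Q : F[X]} (hP : P.Monic) (hQ : Q.Monic) (hPi : Irreducible P)
    (hQi : Irreducible Q) (h : P ∣ Q) : P = Q :=
  Polynomial.eq_of_monic_of_associated hP hQ (hPi.associated_of_dvd hQi h)

lemma pp_unique {P Q : F[X]} (hPm : P.Monic) (hPi : Irreducible P) (hQm : Q.Monic)
    (hQi : Irreducible Q) {e d : ℕ} (he : 1 ≤ e) (hd : 1 ≤ d) (h : P ^ e = Q ^ d) :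
    P = Q ∧ e = d := by
  have hdvd : P ∣ Q ^ d := h ▸ dvd_pow_self P (by omega)
  have hPQ : P = Q := monic_irred_eq hPm hQm hPi hQi (hPi.prime.dvd_of_dvd_pow hdvd)
  subst hPQ
  refine ⟨rfl, ?_⟩
  have h2 := congrArg natDegree h
  rw [natDegree_pow, natDegree_pow] at h2
  exact Nat.eq_of_mul_eq_mul_right hPi.natDegree_pos h2

/-- the prime of a prime power -/
noncomputable def primeOf (u : F[X]) : F[X] :=
  letI := Classical.propDecidable (IsPP u)
  if h : IsPP u then Classical.choose h else 0

lemma primeOf_spec {u : F[X]} (h : IsPP u) :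
    (primeOf u).Monic ∧ Irreducible (primeOf u) ∧ ∃ e : ℕ, 1 ≤ e ∧ u = primeOf u ^ e := by
  rw [primeOf, dif_pos h]
  obtain ⟨⟨hm, hi⟩, he⟩ := Classical.choose_spec h
  exact ⟨hm, hi, he⟩

lemma primeOf_eq {P : F[X]} (hPm : P.Monic) (hPi : Irreducible P) {e : ℕ} (he : 1 ≤ e) :
    primeOf (P ^ e) = P := by
  have h : IsPP (P ^ e) := ⟨P, ⟨hPm, hPi⟩, e, he, rfl⟩
  obtain ⟨hm, hi, d, hd, hu⟩ := primeOf_spec h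
  exact (pp_unique hm hi hPm hPi hd he hu.symm).1

lemma vM_ne_zero {u : F[X]} (h : polyVonMangoldt F u ≠ 0) : IsPP u := by
  by_contra hc
  rw [vM_def] at h
  exact h (dif_neg hc)

lemma vM_nonneg (u : F[X]) : 0 ≤ polyVonMangoldt F u := by
  rw [vM_def]
  split <;> positivity

lemma vM_le_natDegree (u : F[X]) : polyVonMangoldt F u ≤ (u.natDegree : ℝ) := by
  rw [vM_def]
  split
  · rename_i h
    obtain ⟨⟨hm, hi⟩, e, he, hue⟩ := Classical.choose_spec h
    conv_rhs => rw [hue]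
    rw [natDegree_pow]
    exact_mod_cast Nat.le_mul_of_pos_left _ (by omega)
  · exact_mod_cast Nat.zero_le _

/-- prime powers with the same prime and same degree are equal -/
lemma pp_eq_of_primeOf_eq {u v : F[X]} (hu : IsPP u) (hv : IsPP v)
    (hp : primeOf u = primeOf v) (hd : u.natDegree = v.natDegree) : u = v := by
  obtain ⟨hum, hui, e, he, hue⟩ := primeOf_spec hu
  obtain ⟨hvm, hvi, d, hd', hve⟩ := primeOf_spec hv
  set P := primeOf u with hP
  set Q := primeOf v with hQ
  have h1 : u.natDegree = e * P.natDegree := by rw [hue, natDegree_pow]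
  have h2 : v.natDegree = d * Q.natDegree := by rw [hve, natDegree_pow]
  have hpos := hui.natDegree_pos
  have hed : e = d := by
    rw [hp] at h1 hpos
    exact Nat.eq_of_mul_eq_mul_right hpos (by omega)
  rw [hue, hve, hp, hed]

section Counting
variable (F : Type) [Field F] [Fintype F]




lemma finite_monic (d : ℕ) : {p : F[X] | p.Monic ∧ p.natDegree = d}.Finite := by
  apply Set.Finite.of_finite_image (f := fun p => fun j : Fin (d+1) => p.coeff j)
  · exact Set.toFinite _
  · rintro p ⟨hpm, hpd⟩ q ⟨hqm, hqd⟩ h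
    ext n
    rcases le_or_gt n d with hn | hn
    · exact congrFun h ⟨n, by omega⟩
    · rw [coeff_eq_zero_of_natDegree_lt (by omega), coeff_eq_zero_of_natDegree_lt (by omega)]

noncomputable def Mfin (d : ℕ) : Finset F[X] := (finite_monic F d).toFinset

lemma mem_Mfin {d : ℕ} {p : F[X]} : p ∈ Mfin F d ↔ p.Monic ∧ p.natDegree = d := by
  rw [Mfin, Set.Finite.mem_toFinset]; rfl

lemma card_Mfin (d : ℕ) : (Mfin F d).card ≤ Fintype.card F ^ d := by
  classical
  have := Finset.card_le_card_of_injOn (f := fun p : F[X] => fun j : Fin d => p.coeff j)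
    (s := Mfin F d) (t := Finset.univ) (fun p _ => Finset.mem_univ _) ?_
  · calc (Mfin F d).card ≤ (Finset.univ : Finset (Fin d → F)).card := this
      _ = Fintype.card F ^ d := by
        rw [Finset.card_univ, Fintype.card_fun, Fintype.card_fin]
  · intro p hp q hq h
    rw [Finset.mem_coe, mem_Mfin] at hp hq
    obtain ⟨hpm, hpd⟩ := hp
    obtain ⟨hqm, hqd⟩ := hq
    ext n
    rcases lt_trichotomy n d with hn | hn | hn
    · exact congrFun h ⟨n, hn⟩
    · subst hn
      rw [← hpd, hpm.coeff_natDegree, hpd, ← hqd, hqm.coeff_natDegree]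
    · rw [coeff_eq_zero_of_natDegree_lt (by omega), coeff_eq_zero_of_natDegree_lt (by omega)]

lemma finite_mle (n : ℕ) : {p : F[X] | p.Monic ∧ 1 ≤ p.natDegree ∧ p.natDegree ≤ n}.Finite := by
  apply Set.Finite.of_finite_image (f := fun p => fun j : Fin (n+1) => p.coeff j)
  · exact Set.toFinite _
  · rintro p ⟨hpm, _, hpd⟩ q ⟨hqm, _, hqd⟩ h
    ext m
    rcases le_or_gt m n with hm | hm
    · exact congrFun h ⟨m, by omega⟩
    · rw [coeff_eq_zero_of_natDegree_lt (by omega), coeff_eq_zero_of_natDegree_lt (by omega)]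

noncomputable def Mle (n : ℕ) : Finset F[X] := (finite_mle F n).toFinset

lemma mem_Mle {n : ℕ} {p : F[X]} :
    p ∈ Mle F n ↔ p.Monic ∧ 1 ≤ p.natDegree ∧ p.natDegree ≤ n := by
  rw [Mle, Set.Finite.mem_toFinset]; rfl

lemma card_Mle (n : ℕ) : (Mle F n).card ≤ n * Fintype.card F ^ n := by
  classical
  have hsub : Mle F n ⊆ (Finset.Icc 1 n).biUnion (fun d => Mfin F d) := by
    intro p hp
    rw [mem_Mle] at hp
    exact Finset.mem_biUnion.2 ⟨p.natDegree, Finset.mem_Icc.2 ⟨hp.2.1, hp.2.2⟩,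
      (mem_Mfin F).2 ⟨hp.1, rfl⟩⟩
  calc (Mle F n).card ≤ ((Finset.Icc 1 n).biUnion (fun d => Mfin F d)).card :=
        Finset.card_le_card hsub
    _ ≤ ∑ d ∈ Finset.Icc 1 n, (Mfin F d).card := Finset.card_biUnion_le
    _ ≤ (Finset.Icc 1 n).card • (Fintype.card F ^ n) := by
        apply Finset.sum_le_card_nsmul
        intro d hd
        exact le_trans (card_Mfin F d)
          (Nat.pow_le_pow_right Fintype.card_pos (Finset.mem_Icc.1 hd).2)
    _ = n * Fintype.card F ^ n := by rw [Nat.card_Icc]; simp [Nat.smul_one_eq_cast]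

end Counting
end DegAux

/-- **Degenerate tuples contribute `O(q^(R-1))`.** Fix `k, l ≥ 1` and positive integers
`r 1, …, r k`, `t 1, …, t l` with `∑ r i = ∑ t j = R`. There is a constant `C = C(k, l, R)`
such that for every finite field `𝔽_q`, the sum of `∏ Λ(u i) ∏ Λ(v j)` over all tuples of
monic polynomials with `deg (u i) = r i`, `deg (v j) = t j`, `u 1 ⋯ u k = v 1 ⋯ v l` such that
NOT all of the `u i` are irreducible and pairwise distinct, is at most `C q^(R-1)`. -/
theorem degenerate_tuples_contribution (k l : ℕ) (hk : 1 ≤ k) (hl : 1 ≤ l) (R : ℕ) :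
    ∃ C : ℝ, ∀ (r : Fin k → ℕ) (t : Fin l → ℕ),
      (∀ i, 1 ≤ r i) → (∀ j, 1 ≤ t j) → ∑ i, r i = R → ∑ j, t j = R →
      ∀ (F : Type) [Field F] [Fintype F],
        (∑ᶠ (w : (Fin k → F[X]) × (Fin l → F[X]))
            (_ : (∀ i, (w.1 i).Monic ∧ (w.1 i).natDegree = r i) ∧
                 (∀ j, (w.2 j).Monic ∧ (w.2 j).natDegree = t j) ∧
                 (∏ i, w.1 i) = (∏ j, w.2 j) ∧
                 ¬ ((∀ i, Irreducible (w.1 i)) ∧ Function.Injective w.1)),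
          (∏ i, polyVonMangoldt F (w.1 i)) * ∏ j, polyVonMangoldt F (w.2 j)) ≤
        C * (Fintype.card F : ℝ) ^ (R - 1) := by
  classical
  refine ⟨(((R + k * k) * k ^ l * R ^ (k + l) : ℕ) : ℝ), ?_⟩
  intro r t hr ht hrR htR F _ _
  set q := Fintype.card F with hq
  -- the finset of relevant tuples
  set T : Finset ((Fin k → F[X]) × (Fin l → F[X])) :=
    ((Fintype.piFinset fun i => DegAux.Mfin F (r i)) ×ˢ
     (Fintype.piFinset fun j => DegAux.Mfin F (t j))).filter
      (fun w => ((∀ i, (w.1 i).Monic ∧ (w.1 i).natDegree = r i) ∧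
                 (∀ j, (w.2 j).Monic ∧ (w.2 j).natDegree = t j) ∧
                 (∏ i, w.1 i) = (∏ j, w.2 j) ∧
                 ¬ ((∀ i, Irreducible (w.1 i)) ∧ Function.Injective w.1)) ∧
        (∏ i, polyVonMangoldt F (w.1 i)) * ∏ j, polyVonMangoldt F (w.2 j) ≠ 0) with hT
  have hmemT : ∀ w ∈ T, ((∀ i, (w.1 i).Monic ∧ (w.1 i).natDegree = r i) ∧
                 (∀ j, (w.2 j).Monic ∧ (w.2 j).natDegree = t j) ∧
                 (∏ i, w.1 i) = (∏ j, w.2 j) ∧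
                 ¬ ((∀ i, Irreducible (w.1 i)) ∧ Function.Injective w.1)) ∧
        (∏ i, polyVonMangoldt F (w.1 i)) * ∏ j, polyVonMangoldt F (w.2 j) ≠ 0 :=
    fun w hw => (Finset.mem_filter.1 hw).2
  -- prime power facts for members
  have hU : ∀ w ∈ T, ∀ i, DegAux.IsPP (w.1 i) := by
    intro w hw i
    obtain ⟨hc, hne⟩ := hmemT w hw
    apply DegAux.vM_ne_zero
    intro h0
    exact hne (by rw [Finset.prod_eq_zero (Finset.mem_univ i) h0, zero_mul])
  have hV : ∀ w ∈ T, ∀ j, DegAux.IsPP (w.2 j) := by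
    intro w hw j
    obtain ⟨hc, hne⟩ := hmemT w hw
    apply DegAux.vM_ne_zero
    intro h0
    exact hne (by rw [Finset.prod_eq_zero (Finset.mem_univ j) h0, mul_zero])
  have hq1 : 1 ≤ q := Fintype.card_pos
  have hrle : ∀ i, r i ≤ R := fun i =>
    hrR ▸ Finset.single_le_sum (f := r) (fun _ _ => Nat.zero_le _) (Finset.mem_univ i)
  have htle : ∀ j, t j ≤ R := fun j =>
    htR ▸ Finset.single_le_sum (f := t) (fun _ _ => Nat.zero_le _) (Finset.mem_univ j)
  -- the index map recording which u-prime each v-prime equals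
  set sig : ((Fin k → F[X]) × (Fin l → F[X])) → (Fin l → Fin k) := fun w j =>
    if h : ∃ m : Fin k, DegAux.primeOf (w.2 j) = DegAux.primeOf (w.1 m) then h.choose
    else ⟨0, hk⟩ with hsigdef
  have hsig : ∀ w ∈ T, ∀ j, DegAux.primeOf (w.2 j) = DegAux.primeOf (w.1 (sig w j)) := by
    intro w hw j
    have hex : ∃ m : Fin k, DegAux.primeOf (w.2 j) = DegAux.primeOf (w.1 m) := by
      obtain ⟨hQm, hQi, d, hd, hvd⟩ := DegAux.primeOf_spec (hV w hw j)
      have hQdvd : DegAux.primeOf (w.2 j) ∣ ∏ i, w.1 i := by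
        rw [(hmemT w hw).1.2.2.1]
        refine dvd_trans ?_ (Finset.dvd_prod_of_mem _ (Finset.mem_univ j))
        conv_rhs => rw [hvd]
        exact dvd_pow_self _ (by omega)
      obtain ⟨m, _, hm⟩ := hQi.prime.exists_mem_finset_dvd hQdvd
      obtain ⟨hPm, hPi, e, he, hue⟩ := DegAux.primeOf_spec (hU w hw m)
      refine ⟨m, ?_⟩
      have hdp : DegAux.primeOf (w.2 j) ∣ DegAux.primeOf (w.1 m) ^ e := by
        rw [← hue]; exact hm
      exact DegAux.monic_irred_eq hQm hPm hQi hPi (hQi.prime.dvd_of_dvd_pow hdp)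
    rw [hsigdef]
    simp only [dif_pos hex]
    exact hex.choose_spec
  -- reconstruction of the v-part
  have hrec : ∀ w ∈ T, ∀ w' ∈ T, w.1 = w'.1 → sig w = sig w' → w.2 = w'.2 := by
    intro w hw w' hw' h1 hs
    funext j
    apply DegAux.pp_eq_of_primeOf_eq (hV w hw j) (hV w' hw' j)
    · rw [hsig w hw j, hsig w' hw' j, h1, hs]
    · rw [((hmemT w hw).1.2.1 j).2, ((hmemT w' hw').1.2.1 j).2]
  -- the pieces
  set A : Fin k → Finset ((Fin k → F[X]) × (Fin l → F[X])) := fun i =>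
    T.filter (fun w => ¬ Irreducible (w.1 i)) with hA
  set B : Fin k → Fin k → Finset ((Fin k → F[X]) × (Fin l → F[X])) := fun i j =>
    T.filter (fun w => i ≠ j ∧ w.1 i = w.1 j) with hB
  have hcover : T ⊆ (Finset.univ.biUnion A) ∪
      (Finset.univ.biUnion fun i => Finset.univ.biUnion (B i)) := by
    intro w hw
    have hd := (hmemT w hw).1.2.2.2
    rw [not_and_or] at hd
    rcases hd with hd | hd
    · push_neg at hd
      obtain ⟨i, hi⟩ := hd
      exact Finset.mem_union_left _ (Finset.mem_biUnion.2
        ⟨i, Finset.mem_univ _, Finset.mem_filter.2 ⟨hw, hi⟩⟩)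
    · rw [Function.not_injective_iff] at hd
      obtain ⟨i, j, hij, hne'⟩ := hd
      exact Finset.mem_union_right _ (Finset.mem_biUnion.2 ⟨i, Finset.mem_univ _,
        Finset.mem_biUnion.2 ⟨j, Finset.mem_univ _, Finset.mem_filter.2 ⟨hw, hne', hij⟩⟩⟩)
  -- cardinality of the pieces, case A
  have hAcard : ∀ i, (A i).card ≤ r i * (q ^ (R - 1) * k ^ l) := by
    intro i
    have hinj : (A i).card ≤ ((DegAux.Mle F (r i - 1)) ×ˢ
        ((Fintype.piFinset fun m => if m = i then ({1} : Finset F[X]) else DegAux.Mfin F (r m))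
          ×ˢ (Finset.univ : Finset (Fin l → Fin k)))).card := by
      apply Finset.card_le_card_of_injOn
        (fun w => (DegAux.primeOf (w.1 i), (Function.update w.1 i 1, sig w)))
      · intro w hw
        have hwT : w ∈ T := Finset.mem_of_mem_filter _ hw
        have hirr : ¬ Irreducible (w.1 i) := (Finset.mem_filter.1 hw).2
        obtain ⟨hPm, hPi, e, he, hue⟩ := DegAux.primeOf_spec (hU w hwT i)
        have he2 : 2 ≤ e := by
          rcases Nat.lt_or_ge e 2 with h2 | h2
          · exfalso
            have he1 : e = 1 := by omega
            rw [he1, pow_one] at hue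
            exact hirr (hue ▸ hPi)
          · exact h2
        have hdeg : e * (DegAux.primeOf (w.1 i)).natDegree = r i := by
          have hdr := ((hmemT w hwT).1.1 i).2
          conv_lhs at hdr => rw [hue]
          rw [natDegree_pow] at hdr
          exact hdr
        rw [Finset.mem_coe, Finset.mem_product]
        dsimp only
        constructor
        · rw [DegAux.mem_Mle]
          refine ⟨hPm, hPi.natDegree_pos, ?_⟩
          have h2d : 2 * (DegAux.primeOf (w.1 i)).natDegree ≤
              e * (DegAux.primeOf (w.1 i)).natDegree := Nat.mul_le_mul_right _ he2
          have := hPi.natDegree_pos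
          omega
        · rw [Finset.mem_product]
          refine ⟨Fintype.mem_piFinset.2 fun m => ?_, Finset.mem_univ _⟩
          dsimp only
          by_cases hm : m = i
          · subst hm; simp
          · rw [if_neg hm, Function.update_of_ne hm]
            exact (DegAux.mem_Mfin F).2 ((hmemT w hwT).1.1 m)
      · intro w hw w' hw' heq
        have hwT : w ∈ T := Finset.mem_of_mem_filter _ hw
        have hwT' : w' ∈ T := Finset.mem_of_mem_filter _ hw'
        have hp : DegAux.primeOf (w.1 i) = DegAux.primeOf (w'.1 i) := congrArg Prod.fst heq
        have hu : Function.update w.1 i 1 = Function.update w'.1 i 1 :=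
          congrArg (fun x => x.2.1) heq
        have hs : sig w = sig w' := congrArg (fun x => x.2.2) heq
        have h1 : w.1 = w'.1 := by
          funext m
          by_cases hm : m = i
          · subst hm
            exact DegAux.pp_eq_of_primeOf_eq (hU w hwT m) (hU w' hwT' m) hp
              (by rw [((hmemT w hwT).1.1 m).2, ((hmemT w' hwT').1.1 m).2])
          · have := congrFun hu m
            rwa [Function.update_of_ne hm, Function.update_of_ne hm] at this
        exact Prod.ext h1 (hrec w hwT w' hwT' h1 hs)
    refine le_trans hinj ?_
    rw [Finset.card_product, Finset.card_product, Fintype.card_piFinset]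
    have hprodcard : (∏ m, (if m = i then ({1} : Finset F[X])
        else DegAux.Mfin F (r m)).card) ≤ q ^ (R - r i) := by
      calc (∏ m, (if m = i then ({1} : Finset F[X]) else DegAux.Mfin F (r m)).card)
          ≤ ∏ m, (if m = i then 1 else q ^ (r m)) := by
            apply Finset.prod_le_prod'
            intro m _
            by_cases hm : m = i
            · simp [hm]
            · simpa [hm] using DegAux.card_Mfin F (r m)
        _ = ∏ m ∈ Finset.univ.erase i, q ^ (r m) := by
            rw [← Finset.mul_prod_erase Finset.univ _ (Finset.mem_univ i), if_pos rfl, one_mul]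
            exact Finset.prod_congr rfl fun m hm => if_neg (Finset.ne_of_mem_erase hm)
        _ = q ^ (∑ m ∈ Finset.univ.erase i, r m) := Finset.prod_pow_eq_pow_sum _ _ _
        _ = q ^ (R - r i) := by
            congr 1
            have := Finset.add_sum_erase Finset.univ r (Finset.mem_univ i)
            omega
    calc (DegAux.Mle F (r i - 1)).card *
          ((∏ m, (if m = i then ({1} : Finset F[X]) else DegAux.Mfin F (r m)).card) *
            (Finset.univ : Finset (Fin l → Fin k)).card)
        ≤ ((r i - 1) * q ^ (r i - 1)) * (q ^ (R - r i) * k ^ l) := by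
          have hMle := DegAux.card_Mle F (r i - 1)
          have hcardfun : (Finset.univ : Finset (Fin l → Fin k)).card = k ^ l := by
            rw [Finset.card_univ, Fintype.card_fun, Fintype.card_fin, Fintype.card_fin]
          rw [hcardfun]
          exact Nat.mul_le_mul hMle (Nat.mul_le_mul_right _ hprodcard)
      _ ≤ r i * (q ^ (R - 1) * k ^ l) := by
          have hpow : q ^ (r i - 1) * q ^ (R - r i) = q ^ (R - 1) := by
            rw [← pow_add]
            congr 1
            have := hr i
            have := hrle i
            omega
          calc ((r i - 1) * q ^ (r i - 1)) * (q ^ (R - r i) * k ^ l)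
              = (r i - 1) * ((q ^ (r i - 1) * q ^ (R - r i)) * k ^ l) := by ring
            _ = (r i - 1) * (q ^ (R - 1) * k ^ l) := by rw [hpow]
            _ ≤ r i * (q ^ (R - 1) * k ^ l) := Nat.mul_le_mul_right _ (Nat.sub_le _ _)
  -- cardinality of the pieces, case B
  have hBcard : ∀ i j, (B i j).card ≤ q ^ (R - 1) * k ^ l := by
    intro i j
    have hinj : (B i j).card ≤
        ((Fintype.piFinset fun m => if m = i then ({1} : Finset F[X]) else DegAux.Mfin F (r m))
          ×ˢ (Finset.univ : Finset (Fin l → Fin k))).card := by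
      apply Finset.card_le_card_of_injOn (fun w => (Function.update w.1 i 1, sig w))
      · intro w hw
        have hwT : w ∈ T := Finset.mem_of_mem_filter _ hw
        rw [Finset.mem_coe, Finset.mem_product]
        refine ⟨Fintype.mem_piFinset.2 fun m => ?_, Finset.mem_univ _⟩
        dsimp only
        by_cases hm : m = i
        · subst hm; simp
        · rw [if_neg hm, Function.update_of_ne hm]
          exact (DegAux.mem_Mfin F).2 ((hmemT w hwT).1.1 m)
      · intro w hw w' hw' heq
        have hwT : w ∈ T := Finset.mem_of_mem_filter _ hw
        have hwT' : w' ∈ T := Finset.mem_of_mem_filter _ hw'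
        have hij : i ≠ j ∧ w.1 i = w.1 j := (Finset.mem_filter.1 hw).2
        have hij' : i ≠ j ∧ w'.1 i = w'.1 j := (Finset.mem_filter.1 hw').2
        have hu : Function.update w.1 i 1 = Function.update w'.1 i 1 :=
          congrArg Prod.fst heq
        have hs : sig w = sig w' := congrArg Prod.snd heq
        have h1 : w.1 = w'.1 := by
          funext m
          by_cases hm : m = i
          · subst hm
            have hj := congrFun hu j
            rw [Function.update_of_ne (Ne.symm hij.1), Function.update_of_ne (Ne.symm hij.1)]
              at hj
            rw [hij.2, hij'.2]
            exact hj
          · have := congrFun hu m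
            rwa [Function.update_of_ne hm, Function.update_of_ne hm] at this
        exact Prod.ext h1 (hrec w hwT w' hwT' h1 hs)
    refine le_trans hinj ?_
    rw [Finset.card_product, Fintype.card_piFinset]
    have hprodcard : (∏ m, (if m = i then ({1} : Finset F[X])
        else DegAux.Mfin F (r m)).card) ≤ q ^ (R - r i) := by
      calc (∏ m, (if m = i then ({1} : Finset F[X]) else DegAux.Mfin F (r m)).card)
          ≤ ∏ m, (if m = i then 1 else q ^ (r m)) := by
            apply Finset.prod_le_prod'
            intro m _
            by_cases hm : m = i
            · simp [hm]
            · simpa [hm] using DegAux.card_Mfin F (r m)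
        _ = ∏ m ∈ Finset.univ.erase i, q ^ (r m) := by
            rw [← Finset.mul_prod_erase Finset.univ _ (Finset.mem_univ i), if_pos rfl, one_mul]
            exact Finset.prod_congr rfl fun m hm => if_neg (Finset.ne_of_mem_erase hm)
        _ = q ^ (∑ m ∈ Finset.univ.erase i, r m) := Finset.prod_pow_eq_pow_sum _ _ _
        _ = q ^ (R - r i) := by
            congr 1
            have := Finset.add_sum_erase Finset.univ r (Finset.mem_univ i)
            omega
    have hcardfun : (Finset.univ : Finset (Fin l → Fin k)).card = k ^ l := by
      rw [Finset.card_univ, Fintype.card_fun, Fintype.card_fin, Fintype.card_fin]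
    rw [hcardfun]
    refine le_trans (Nat.mul_le_mul_right _ hprodcard) (Nat.mul_le_mul_right _ ?_)
    exact Nat.pow_le_pow_right hq1 (by have := hr i; omega)
  -- total cardinality
  have hTcard : T.card ≤ (R + k * k) * k ^ l * q ^ (R - 1) := by
    calc T.card ≤ ((Finset.univ.biUnion A) ∪
          (Finset.univ.biUnion fun i => Finset.univ.biUnion (B i))).card :=
          Finset.card_le_card hcover
      _ ≤ (Finset.univ.biUnion A).card +
          (Finset.univ.biUnion fun i => Finset.univ.biUnion (B i)).card :=
          by exact Finset.card_union_le _ _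
      _ ≤ (∑ i, (A i).card) + ∑ i, (Finset.univ.biUnion (B i)).card :=
          Nat.add_le_add Finset.card_biUnion_le Finset.card_biUnion_le
      _ ≤ (∑ i, r i * (q ^ (R - 1) * k ^ l)) + ∑ i, ∑ j, (B i j).card :=
          Nat.add_le_add (Finset.sum_le_sum fun i _ => hAcard i)
            (Finset.sum_le_sum fun i _ => Finset.card_biUnion_le)
      _ ≤ (∑ i, r i * (q ^ (R - 1) * k ^ l)) + ∑ i : Fin k, ∑ j : Fin k,
            q ^ (R - 1) * k ^ l :=
          Nat.add_le_add le_rfl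
            (Finset.sum_le_sum fun i _ => Finset.sum_le_sum fun j _ => hBcard i j)
      _ = (R + k * k) * k ^ l * q ^ (R - 1) := by
          rw [← Finset.sum_mul, hrR]
          simp only [Finset.sum_const, Finset.card_univ, Fintype.card_fin, smul_eq_mul]
          ring
  -- per-term bound
  have hterm : ∀ w ∈ T,
      (∏ i, polyVonMangoldt F (w.1 i)) * ∏ j, polyVonMangoldt F (w.2 j) ≤
        (R : ℝ) ^ (k + l) := by
    intro w hw
    obtain ⟨hc, _⟩ := hmemT w hw
    have h1 : (∏ i, polyVonMangoldt F (w.1 i)) ≤ (R : ℝ) ^ k := by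
      calc (∏ i, polyVonMangoldt F (w.1 i)) ≤ ∏ _i : Fin k, (R : ℝ) := by
            apply Finset.prod_le_prod (fun i _ => DegAux.vM_nonneg _)
            intro i _
            refine le_trans (DegAux.vM_le_natDegree _) ?_
            rw [(hc.1 i).2]
            exact_mod_cast hrle i
        _ = (R : ℝ) ^ k := by rw [Finset.prod_const, Finset.card_univ, Fintype.card_fin]
    have h2 : (∏ j, polyVonMangoldt F (w.2 j)) ≤ (R : ℝ) ^ l := by
      calc (∏ j, polyVonMangoldt F (w.2 j)) ≤ ∏ _j : Fin l, (R : ℝ) := by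
            apply Finset.prod_le_prod (fun j _ => DegAux.vM_nonneg _)
            intro j _
            refine le_trans (DegAux.vM_le_natDegree _) ?_
            rw [(hc.2.1 j).2]
            exact_mod_cast htle j
        _ = (R : ℝ) ^ l := by rw [Finset.prod_const, Finset.card_univ, Fintype.card_fin]
    calc (∏ i, polyVonMangoldt F (w.1 i)) * ∏ j, polyVonMangoldt F (w.2 j)
        ≤ (R : ℝ) ^ k * (R : ℝ) ^ l := by
          apply mul_le_mul h1 h2 (Finset.prod_nonneg fun j _ => DegAux.vM_nonneg _)
          positivity
      _ = (R : ℝ) ^ (k + l) := (pow_add _ _ _).symm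
  -- convert the finsum to a finite sum and conclude
  have hsum : (∑ᶠ (w : (Fin k → F[X]) × (Fin l → F[X]))
            (_ : (∀ i, (w.1 i).Monic ∧ (w.1 i).natDegree = r i) ∧
                 (∀ j, (w.2 j).Monic ∧ (w.2 j).natDegree = t j) ∧
                 (∏ i, w.1 i) = (∏ j, w.2 j) ∧
                 ¬ ((∀ i, Irreducible (w.1 i)) ∧ Function.Injective w.1)),
          (∏ i, polyVonMangoldt F (w.1 i)) * ∏ j, polyVonMangoldt F (w.2 j)) =
      ∑ w ∈ T, (∏ i, polyVonMangoldt F (w.1 i)) * ∏ j, polyVonMangoldt F (w.2 j) := by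
    apply finsum_cond_eq_sum_of_cond_iff
    intro w hw
    constructor
    · intro hc
      rw [hT, Finset.mem_filter]
      refine ⟨Finset.mem_product.2 ⟨?_, ?_⟩, hc, hw⟩
      · exact Fintype.mem_piFinset.2 fun i => (DegAux.mem_Mfin F).2 ⟨(hc.1 i).1, (hc.1 i).2⟩
      · exact Fintype.mem_piFinset.2 fun j =>
          (DegAux.mem_Mfin F).2 ⟨(hc.2.1 j).1, (hc.2.1 j).2⟩
    · intro hw'
      exact (hmemT w hw').1
  rw [hsum]
  calc (∑ w ∈ T, (∏ i, polyVonMangoldt F (w.1 i)) * ∏ j, polyVonMangoldt F (w.2 j))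
      ≤ T.card • ((R : ℝ) ^ (k + l)) := Finset.sum_le_card_nsmul T _ _ hterm
    _ = (T.card : ℝ) * (R : ℝ) ^ (k + l) := nsmul_eq_mul _ _
    _ ≤ (((R + k * k) * k ^ l * q ^ (R - 1) : ℕ) : ℝ) * (R : ℝ) ^ (k + l) := by
        apply mul_le_mul_of_nonneg_right _ (by positivity)
        exact_mod_cast hTcard
    _ = (((R + k * k) * k ^ l * R ^ (k + l) : ℕ) : ℝ) * (q : ℝ) ^ (R - 1) := by
        push_cast
        ring
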